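/- Let P be the probability measure on {−2,0,2}³ that assigns probability 1/6 to each of the six triples (−2,0,2), (2,−2,0), (0,2,−2), (2,0,−2), (−2,2,0), (0,−2,2) and probability 0 to all other triples, and let X, Y, Z be the coordinate random variables. Then E[X] = E[Y] = E[Z] = 0 and Cov(X,Y) = Cov(Y,Z) = Cov(X,Z) = −4/3, so that Cov(X,Y) + Cov(Y,Z) + Cov(X,Z) = −4 < −1. Consequently, for random variables with values −2, 0, 2 and zero expectations, the inequality −1 ≤ E[XY] + E[YZ] + E[XZ] is not necessary for the existence of a joint probability distribution. -/
import Mathlib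


open scoped Classical

/-- The sample space `{-2,0,2}³` with coordinates `X, Y, Z`. -/
abbrev TwoTernTriple : Type :=
  ({-2, 0, 2} : Finset ℝ) × ({-2, 0, 2} : Finset ℝ) × ({-2, 0, 2} : Finset ℝ)

private lemma key_sum (g : ℝ → ℝ → ℝ → ℝ) :
    ∑ s : TwoTernTriple, g (s.1 : ℝ) (s.2.1 : ℝ) (s.2.2 : ℝ)
      = ∑ a ∈ ({-2,0,2} : Finset ℝ), ∑ b ∈ ({-2,0,2} : Finset ℝ),
          ∑ c ∈ ({-2,0,2} : Finset ℝ), g a b c := by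
  rw [Fintype.sum_prod_type]
  simp_rw [Fintype.sum_prod_type]
  rw [Finset.univ_eq_attach,
    Finset.sum_attach ({-2,0,2} : Finset ℝ)
      (fun a => ∑ b ∈ ({-2,0,2} : Finset ℝ).attach, ∑ c ∈ ({-2,0,2} : Finset ℝ).attach,
        g a (b : ℝ) (c : ℝ))]
  refine Finset.sum_congr rfl fun a _ => ?_
  rw [Finset.sum_attach ({-2,0,2} : Finset ℝ)
      (fun b => ∑ c ∈ ({-2,0,2} : Finset ℝ).attach, g a b (c : ℝ))]
  refine Finset.sum_congr rfl fun b _ => ?_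
  rw [Finset.sum_attach ({-2,0,2} : Finset ℝ) (fun c => g a b c)]

private noncomputable def qfun (x y z : ℝ) : ℝ :=
  if (x, y, z) ∈
      ({(-2, 0, 2), (2, -2, 0), (0, 2, -2), (2, 0, -2), (-2, 2, 0), (0, -2, 2)} :
        Set (ℝ × ℝ × ℝ)) then 1/6 else 0

private lemma key_eval (g : ℝ → ℝ → ℝ → ℝ) :
    ∑ a ∈ ({-2,0,2} : Finset ℝ), ∑ b ∈ ({-2,0,2} : Finset ℝ),
      ∑ c ∈ ({-2,0,2} : Finset ℝ), qfun a b c * g a b c =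
      1/6 * (g (-2) 0 2 + g 2 (-2) 0 + g 0 2 (-2) + g 2 0 (-2) + g (-2) 2 0 + g 0 (-2) 2) := by
  norm_num [qfun, Finset.sum_insert, Set.mem_insert_iff, Prod.ext_iff]
  ring

/-- Counterexample for random variables with values `-2, 0, 2`: the probability
distribution on `{-2,0,2}³` assigning `1/6` to each of the six triples
`(-2, 0, 2), (2, -2, 0), (0, 2, -2), (2, 0, -2), (-2, 2, 0), (0, -2, 2)` has zero means and all
three covariances equal to `-4/3`, whose sum `-4` is `< -1`. -/
theorem two_valued_covariance_counterexample
    (p : TwoTernTriple → ℝ)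
    (hp : ∀ s : TwoTernTriple, p s =
      if ((s.1 : ℝ), (s.2.1 : ℝ), (s.2.2 : ℝ)) ∈
          ({(-2, 0, 2), (2, -2, 0), (0, 2, -2), (2, 0, -2), (-2, 2, 0), (0, -2, 2)} :
            Set (ℝ × ℝ × ℝ))
        then 1/6 else 0) :
    (∀ s, 0 ≤ p s) ∧ (∑ s, p s = 1) ∧
    -- zero means
    (∑ s, p s * (s.1 : ℝ)) = 0 ∧
    (∑ s, p s * (s.2.1 : ℝ)) = 0 ∧
    (∑ s, p s * (s.2.2 : ℝ)) = 0 ∧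
    -- covariances -4/3
    (∑ s, p s * ((s.1 : ℝ) * (s.2.1 : ℝ))) -
      (∑ s, p s * (s.1 : ℝ)) * (∑ s, p s * (s.2.1 : ℝ)) = -4/3 ∧
    (∑ s, p s * ((s.2.1 : ℝ) * (s.2.2 : ℝ))) -
      (∑ s, p s * (s.2.1 : ℝ)) * (∑ s, p s * (s.2.2 : ℝ)) = -4/3 ∧
    (∑ s, p s * ((s.1 : ℝ) * (s.2.2 : ℝ))) -
      (∑ s, p s * (s.1 : ℝ)) * (∑ s, p s * (s.2.2 : ℝ)) = -4/3 ∧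
    -- the sum of the covariances is -4 < -1
    (-4/3 : ℝ) + (-4/3) + (-4/3) = -4 ∧ (-4 : ℝ) < -1 := by
  have hq : ∀ s : TwoTernTriple, p s = qfun (s.1 : ℝ) (s.2.1 : ℝ) (s.2.2 : ℝ) := by
    intro s; rw [hp]; rfl
  have H : ∀ g : ℝ → ℝ → ℝ → ℝ,
      ∑ s : TwoTernTriple, p s * g (s.1 : ℝ) (s.2.1 : ℝ) (s.2.2 : ℝ)
        = 1/6 * (g (-2) 0 2 + g 2 (-2) 0 + g 0 2 (-2) + g 2 0 (-2) + g (-2) 2 0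
            + g 0 (-2) 2) := by
    intro g
    have h1 : ∑ s : TwoTernTriple, p s * g (s.1 : ℝ) (s.2.1 : ℝ) (s.2.2 : ℝ)
        = ∑ s : TwoTernTriple,
            qfun (s.1 : ℝ) (s.2.1 : ℝ) (s.2.2 : ℝ) * g (s.1 : ℝ) (s.2.1 : ℝ) (s.2.2 : ℝ) :=
      Finset.sum_congr rfl fun s _ => by rw [hq]
    rw [h1, key_sum (fun x y z => qfun x y z * g x y z), key_eval]
  have hnonneg : ∀ s, 0 ≤ p s := by
    intro s; rw [hp]; split <;> norm_num
  have htot : ∑ s, p s = 1 := by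
    have := H (fun _ _ _ => 1)
    simp only [mul_one] at this
    rw [this]; norm_num
  have hX : (∑ s, p s * (s.1 : ℝ)) = 0 := by rw [H (fun x _ _ => x)]; norm_num
  have hY : (∑ s, p s * (s.2.1 : ℝ)) = 0 := by rw [H (fun _ y _ => y)]; norm_num
  have hZ : (∑ s, p s * (s.2.2 : ℝ)) = 0 := by rw [H (fun _ _ z => z)]; norm_num
  refine ⟨hnonneg, htot, hX, hY, hZ, ?_, ?_, ?_, by norm_num, by norm_num⟩
  · rw [hX, hY, H (fun x y _ => x * y)]; norm_num
  · rw [hY, hZ, H (fun _ y z => y * z)]; norm_num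
  · rw [hX, hZ, H (fun x _ z => x * z)]; norm_num
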